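/- arXiv:1009.2637 — 2 statements merged into one kernel-verified Lean document; each statement's English description precedes it below -/
import Mathlib

section
/- If p_a(0) = 0 for all landmarks a > 1 in the landmark Hamiltonian system, then p_1(t) is constant in time and q^1 moves in a straight line with constant velocity K(0) p_1, while each other landmark satisfies q̇^a(t) = K(q^a(t) - q^1(t)) p_1. -/
open scoped RealInnerProductSpace BigOperators

lemma grad_even_zero {D : ℕ} (K : EuclideanSpace ℝ (Fin D) → ℝ) (hK : ContDiff ℝ 2 K)
    (heven : ∀ x, K (-x) = K x) : gradient K 0 = 0 := by
  have hd : DifferentiableAt ℝ K 0 := (hK.differentiable two_ne_zero) 0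
  have h1 : HasFDerivAt K (fderiv ℝ K 0) 0 := hd.hasFDerivAt
  have hneg : HasFDerivAt (fun x : EuclideanSpace ℝ (Fin D) => -x)
      (-(ContinuousLinearMap.id ℝ (EuclideanSpace ℝ (Fin D)))) 0 :=
    (hasFDerivAt_id (0 : EuclideanSpace ℝ (Fin D))).neg
  have h2 : HasFDerivAt (fun x => K (-x))
      ((fderiv ℝ K 0).comp (-(ContinuousLinearMap.id ℝ (EuclideanSpace ℝ (Fin D))))) 0 := by
    have h1' := h1
    rw [show (0 : EuclideanSpace ℝ (Fin D)) = -0 by simp] at h1'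
    simpa [Function.comp_def] using h1'.comp 0 hneg
  rw [funext heven] at h2
  have huniq := h2.unique h1
  have hz : fderiv ℝ K 0 = 0 := by
    ext x
    have h := DFunLike.congr_fun huniq x
    simp only [ContinuousLinearMap.comp_apply, ContinuousLinearMap.neg_apply,
      ContinuousLinearMap.id_apply, map_neg] at h
    simp only [ContinuousLinearMap.zero_apply]
    linarith
  rw [gradient, hz, map_zero]

lemma grad_cont {D : ℕ} (K : EuclideanSpace ℝ (Fin D) → ℝ) (hK : ContDiff ℝ 2 K) :
    Continuous (gradient K) :=
  (InnerProductSpace.toDual ℝ _).symm.continuous.comp (hK.continuous_fderiv two_ne_zero)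

/-- If initially only the first landmark carries momentum, then its momentum
stays constant, it moves in a straight line with constant velocity `K(0) p₁`,
and every other landmark is dragged along with velocity `K(qᵃ-q¹) p₁`. -/
theorem landmark_one_momentum_dynamics {D N : ℕ}
    (K : EuclideanSpace ℝ (Fin D) → ℝ) (hK : ContDiff ℝ 2 K)
    (heven : ∀ x, K (-x) = K x)
    (q p : ℝ → Fin (N + 1) → EuclideanSpace ℝ (Fin D))
    (hq : ∀ t a, HasDerivAt (fun s => q s a) (∑ b, K (q t a - q t b) • p t b) t)
    (hp : ∀ t a, HasDerivAt (fun s => p s a)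
      (-∑ b, ⟪p t a, p t b⟫ • gradient K (q t a - q t b)) t)
    (h0 : ∀ a, a ≠ 0 → p 0 a = 0) :
    (∀ t, p t 0 = p 0 0) ∧
    (∀ t, q t 0 = q 0 0 + t • (K 0 • p 0 0)) ∧
    (∀ a, a ≠ 0 → ∀ t,
      HasDerivAt (fun s => q s a) (K (q t a - q t 0) • p t 0) t) := by
  have hgrad0 : gradient K 0 = 0 := grad_even_zero K hK heven
  have hgc : Continuous (gradient K) := grad_cont K hK
  have hqc : ∀ a, Continuous (fun t => q t a) := fun a =>
    continuous_iff_continuousAt.mpr fun t => (hq t a).continuousAt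
  have hpc : ∀ a, Continuous (fun t => p t a) := fun a =>
    continuous_iff_continuousAt.mpr fun t => (hp t a).continuousAt
  -- Key step: the momentum vector is constant in time.
  have key : ∀ t, p t = p 0 := by
    intro t₁
    set T : ℝ := |t₁| + 1 with hT
    have hT0 : 0 < T := by positivity
    have h0T : (0 : ℝ) ∈ Set.Icc (-T) T := ⟨by linarith [abs_nonneg t₁], by linarith [abs_nonneg t₁]⟩
    -- bound on momenta on the time interval
    have hc1 : Continuous (fun t => ∑ a, ‖p t a‖) :=
      continuous_finset_sum _ fun a _ => (hpc a).norm
    obtain ⟨R, hR⟩ := (isCompact_Icc (a := -T) (b := T)).exists_bound_of_continuousOn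
      hc1.continuousOn
    have hpbound : ∀ t ∈ Set.Icc (-T) T, ∀ a, ‖p t a‖ ≤ R := by
      intro t ht a
      calc ‖p t a‖ ≤ ∑ b, ‖p t b‖ :=
            Finset.single_le_sum (fun b _ => norm_nonneg _) (Finset.mem_univ a)
        _ ≤ ‖∑ b, ‖p t b‖‖ := le_abs_self _
        _ ≤ R := hR t ht
    have hR0 : 0 ≤ R := le_trans (norm_nonneg _) (hR 0 h0T)
    -- bound on gradients along trajectories on the time interval
    have hc2 : Continuous (fun t => ∑ a, ∑ b, ‖gradient K (q t a - q t b)‖) :=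
      continuous_finset_sum _ fun a _ => continuous_finset_sum _ fun b _ =>
        (hgc.comp ((hqc a).sub (hqc b))).norm
    obtain ⟨M, hM⟩ := (isCompact_Icc (a := -T) (b := T)).exists_bound_of_continuousOn
      hc2.continuousOn
    have hMbound : ∀ t ∈ Set.Icc (-T) T, ∀ a b, ‖gradient K (q t a - q t b)‖ ≤ M := by
      intro t ht a b
      calc ‖gradient K (q t a - q t b)‖ ≤ ∑ b', ‖gradient K (q t a - q t b')‖ :=
            Finset.single_le_sum (f := fun b' => ‖gradient K (q t a - q t b')‖)
              (fun b' _ => norm_nonneg _) (Finset.mem_univ b)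
        _ ≤ ∑ a', ∑ b', ‖gradient K (q t a' - q t b')‖ :=
            Finset.single_le_sum (f := fun a' => ∑ b', ‖gradient K (q t a' - q t b')‖)
              (fun a' _ => Finset.sum_nonneg fun b' _ => norm_nonneg _) (Finset.mem_univ a)
        _ ≤ ‖∑ a', ∑ b', ‖gradient K (q t a' - q t b')‖‖ := le_abs_self _
        _ ≤ M := hM t ht
    have hM0 : 0 ≤ M := le_trans (norm_nonneg _) (hM 0 h0T)
    -- the vector field and the containing sets
    set v : ℝ → (Fin (N + 1) → EuclideanSpace ℝ (Fin D)) →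
        (Fin (N + 1) → EuclideanSpace ℝ (Fin D)) :=
      fun t x a => -∑ b, ⟪x a, x b⟫ • gradient K (q t a - q t b) with hvdef
    set sset : ℝ → Set (Fin (N + 1) → EuclideanSpace ℝ (Fin D)) :=
      fun t => if t ∈ Set.Icc (-T) T then Metric.closedBall 0 R else ∅ with hsdef
    set C : ℝ := (N + 1 : ℝ) * (2 * R * M) with hCdef
    have hC0 : 0 ≤ C := by positivity
    have hlip : ∀ t, LipschitzOnWith C.toNNReal (v t) (sset t) := by
      intro t
      by_cases ht : t ∈ Set.Icc (-T) T
      · rw [hsdef]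
        simp only [if_pos ht]
        apply LipschitzOnWith.of_dist_le_mul
        intro x hx y hy
        rw [Metric.mem_closedBall, dist_zero_right] at hx hy
        have hxa : ∀ a, ‖x a‖ ≤ R := fun a => le_trans (norm_le_pi_norm x a) hx
        have hya : ∀ a, ‖y a‖ ≤ R := fun a => le_trans (norm_le_pi_norm y a) hy
        have hd0 : 0 ≤ dist x y := dist_nonneg
        have hCoe : (C.toNNReal : ℝ) = C := Real.coe_toNNReal C hC0
        rw [dist_pi_le_iff (by rw [hCoe]; positivity)]
        intro a
        rw [dist_eq_norm]
        have hdiff : v t x a - v t y a =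
            ∑ b, (⟪y a, y b⟫ - ⟪x a, x b⟫) • gradient K (q t a - q t b) := by
          simp only [hvdef]
          rw [neg_sub_neg, ← Finset.sum_sub_distrib]
          congr 1
          funext b
          rw [← sub_smul]
        rw [hdiff]
        have hterm : ∀ b, ‖(⟪y a, y b⟫ - ⟪x a, x b⟫) • gradient K (q t a - q t b)‖ ≤
            2 * R * dist x y * M := by
          intro b
          rw [norm_smul]
          have hsplit : ⟪y a, y b⟫ - ⟪x a, x b⟫ = ⟪y a - x a, y b⟫ + ⟪x a, y b - x b⟫ := by
            rw [inner_sub_left, inner_sub_right]; ring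
          have hab : ‖y a - x a‖ ≤ dist x y := by
            rw [← dist_eq_norm, dist_comm]; exact dist_le_pi_dist x y a
          have hbb : ‖y b - x b‖ ≤ dist x y := by
            rw [← dist_eq_norm, dist_comm]; exact dist_le_pi_dist x y b
          have hin : ‖⟪y a, y b⟫ - ⟪x a, x b⟫‖ ≤ 2 * R * dist x y := by
            rw [hsplit]
            calc ‖⟪y a - x a, y b⟫ + ⟪x a, y b - x b⟫‖
                ≤ ‖⟪y a - x a, y b⟫‖ + ‖⟪x a, y b - x b⟫‖ := norm_add_le _ _
              _ ≤ ‖y a - x a‖ * ‖y b‖ + ‖x a‖ * ‖y b - x b‖ := by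
                  gcongr <;> exact norm_inner_le_norm _ _
              _ ≤ dist x y * R + R * dist x y :=
                  add_le_add (mul_le_mul hab (hya b) (norm_nonneg _) hd0)
                    (mul_le_mul (hxa a) hbb (norm_nonneg _) hR0)
              _ = 2 * R * dist x y := by ring
          calc ‖⟪y a, y b⟫ - ⟪x a, x b⟫‖ * ‖gradient K (q t a - q t b)‖
              ≤ (2 * R * dist x y) * M := by
                apply mul_le_mul hin (hMbound t ht a b) (norm_nonneg _) (by positivity)
            _ = 2 * R * dist x y * M := by ring
        calc ‖∑ b, (⟪y a, y b⟫ - ⟪x a, x b⟫) • gradient K (q t a - q t b)‖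
            ≤ ∑ _b : Fin (N + 1), 2 * R * dist x y * M :=
              le_trans (norm_sum_le _ _) (Finset.sum_le_sum fun b _ => hterm b)
          _ = (N + 1 : ℝ) * (2 * R * dist x y * M) := by
              rw [Finset.sum_const, Finset.card_univ, Fintype.card_fin]
              ring
          _ = (C.toNNReal : ℝ) * dist x y := by rw [Real.coe_toNNReal C hC0, hCdef]; ring
      · rw [hsdef]
        simp only [if_neg ht]
        exact lipschitzOnWith_empty _ _
    -- p is a solution
    have hfd : ∀ t ∈ Set.Ioo (-T) T, HasDerivAt p (v t (p t)) t := fun t _ =>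
      hasDerivAt_pi.2 fun a => hp t a
    have hmemf : ∀ t ∈ Set.Ioo (-T) T, p t ∈ sset t := by
      intro t ht
      rw [hsdef]
      simp only [if_pos (Set.Ioo_subset_Icc_self ht)]
      rw [Metric.mem_closedBall, dist_zero_right, pi_norm_le_iff_of_nonneg hR0]
      exact hpbound t (Set.Ioo_subset_Icc_self ht)
    -- the constant function is a solution
    have hvg : ∀ t, v t (p 0) = 0 := by
      intro t
      funext a
      simp only [hvdef]
      rw [Pi.zero_apply, neg_eq_zero]
      by_cases ha : a = 0
      · subst ha
        apply Finset.sum_eq_zero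
        intro b _
        by_cases hb : b = 0
        · subst hb; rw [sub_self, hgrad0, smul_zero]
        · rw [h0 b hb, inner_zero_right, zero_smul]
      · apply Finset.sum_eq_zero
        intro b _
        rw [h0 a ha, inner_zero_left, zero_smul]
    have hgd : ∀ t ∈ Set.Ioo (-T) T,
        HasDerivAt (fun _ : ℝ => p 0) (v t ((fun _ : ℝ => p 0) t)) t := by
      intro t _
      rw [hvg t]
      exact hasDerivAt_const t (p 0)
    have hmemg : ∀ t ∈ Set.Ioo (-T) T, (fun _ : ℝ => p 0) t ∈ sset t := by
      intro t ht
      rw [hsdef]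
      simp only [if_pos (Set.Ioo_subset_Icc_self ht)]
      rw [Metric.mem_closedBall, dist_zero_right, pi_norm_le_iff_of_nonneg hR0]
      exact hpbound 0 h0T
    have h0mem : (0 : ℝ) ∈ Set.Ioo (-T) T := ⟨by linarith [abs_nonneg t₁], by linarith [abs_nonneg t₁]⟩
    have heqon := ODE_solution_unique_of_mem_Icc (fun t _ => hlip t) h0mem
      (continuous_pi hpc).continuousOn hfd hmemf
      continuousOn_const hgd hmemg rfl
    exact heqon ⟨by linarith [neg_abs_le t₁], by linarith [le_abs_self t₁]⟩
  have keyz : ∀ t, ∀ a, a ≠ 0 → p t a = 0 := fun t a ha => by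
    rw [show p t a = p 0 a from congrFun (key t) a]; exact h0 a ha
  have key0 : ∀ t, p t 0 = p 0 0 := fun t => congrFun (key t) 0
  refine ⟨key0, ?_, ?_⟩
  · -- straight line motion of the first landmark
    have hq0 : ∀ t, HasDerivAt (fun s => q s 0) (K 0 • p 0 0) t := by
      intro t
      have := hq t 0
      rwa [Finset.sum_eq_single_of_mem 0 (Finset.mem_univ 0)
        (fun b _ hb => by rw [keyz t b hb, smul_zero]), sub_self, key0 t] at this
    intro t
    have hconst : ∀ s : ℝ, HasDerivAt (fun u : ℝ => q u 0 - u • (K 0 • p 0 0)) 0 s := by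
      intro s
      have h2 : HasDerivAt (fun u : ℝ => u • (K 0 • p 0 0)) (K 0 • p 0 0) s := by
        simpa using (hasDerivAt_id s).smul_const (K 0 • p 0 0)
      exact ((hq0 s).sub h2).congr_deriv (sub_self _)
    have := is_const_of_deriv_eq_zero
      (fun s => ((hconst s).differentiableAt : DifferentiableAt ℝ _ s))
      (fun s => (hconst s).deriv) t 0
    simp only [zero_smul, sub_zero] at this
    rw [sub_eq_iff_eq_add] at this
    exact this
  · -- other landmarks
    intro a ha t
    have := hq t a
    rwa [Finset.sum_eq_single_of_mem 0 (Finset.mem_univ 0)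
      (fun b _ hb => by rw [keyz t b hb, smul_zero])] at this
end

section
/- The circular orbit q¹(t) = (r cos t, r sin t), q²(t) = -q¹(t) with momenta p₁ = (γ₀ - γ(2r))⁻¹ q̇¹, p₂ = -p₁ satisfies the two-landmark geodesic (Hamiltonian) equations if and only if r satisfies γ₀ - γ(2r) + r γ'(2r) = 0. -/
lemma hasDerivAt_euc2 {f : ℝ → EuclideanSpace ℝ (Fin 2)} {v : EuclideanSpace ℝ (Fin 2)} {t : ℝ}
    (hf : ∀ i, HasDerivAt (fun t => f t i) (v i) t) :
    HasDerivAt f v t := by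
  have h : HasDerivAt (fun t => (fun i => f t i : Fin 2 → ℝ)) (fun i => v i) t :=
    hasDerivAt_pi.2 hf
  exact (EuclideanSpace.equiv (Fin 2) ℝ).symm.hasFDerivAt.comp_hasDerivAt t h

lemma euc2_norm (x : EuclideanSpace ℝ (Fin 2)) :
    ‖x‖ = Real.sqrt (x 0 ^ 2 + x 1 ^ 2) := by
  rw [EuclideanSpace.norm_eq]
  simp [Fin.sum_univ_two, sq_abs, Real.norm_eq_abs]

noncomputable def dq (r t : ℝ) : EuclideanSpace ℝ (Fin 2) :=
  !₂[r * Real.cos t, r * Real.sin t]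

noncomputable def dp (γ : ℝ → ℝ) (r t : ℝ) : EuclideanSpace ℝ (Fin 2) :=
  (γ 0 - γ (2 * r))⁻¹ • (!₂[-(r * Real.sin t), r * Real.cos t] : EuclideanSpace ℝ (Fin 2))

lemma aux (γ : ℝ → ℝ) (dγ r : ℝ) (hr : 0 < r) (hne : γ 0 ≠ γ (2 * r)) :
    ((∀ t, HasDerivAt (dq r) ((γ 0 - γ (2 * ‖dq r t‖)) • dp γ r t) t) ∧
     (∀ t, HasDerivAt (dp γ r)
        ((-2 * (dγ / (2 * ‖dq r t‖)) *
          (‖(0 : EuclideanSpace ℝ (Fin 2))‖ ^ 2 - ‖dp γ r t‖ ^ 2)) • dq r t) t))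
      ↔ γ 0 - γ (2 * r) + r * dγ = 0 := by
  set c := γ 0 - γ (2 * r) with hcdef
  have hc : c ≠ 0 := sub_ne_zero.2 hne
  have hnq : ∀ t : ℝ, ‖dq r t‖ = r := by
    intro t
    rw [euc2_norm]
    have h1 : dq r t 0 = r * Real.cos t := rfl
    have h2 : dq r t 1 = r * Real.sin t := rfl
    rw [h1, h2]
    have := Real.sin_sq_add_cos_sq t
    rw [show (r * Real.cos t) ^ 2 + (r * Real.sin t) ^ 2 = r ^ 2 by nlinarith]
    exact Real.sqrt_sq hr.le
  have hnp : ∀ t : ℝ, ‖dp γ r t‖ ^ 2 = c⁻¹ ^ 2 * r ^ 2 := by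
    intro t
    rw [euc2_norm]
    have h1 : dp γ r t 0 = c⁻¹ * (-(r * Real.sin t)) := rfl
    have h2 : dp γ r t 1 = c⁻¹ * (r * Real.cos t) := rfl
    rw [h1, h2, Real.sq_sqrt (by positivity)]
    have := Real.sin_sq_add_cos_sq t
    nlinarith
  have hcos : ∀ t : ℝ, HasDerivAt (fun t => r * Real.cos t) (-(r * Real.sin t)) t := by
    intro t; simpa [mul_comm] using (Real.hasDerivAt_cos t).const_mul r
  have hsin : ∀ t : ℝ, HasDerivAt (fun t => r * Real.sin t) (r * Real.cos t) t := by
    intro t; simpa [mul_comm] using (Real.hasDerivAt_sin t).const_mul r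
  have hdq : ∀ t, HasDerivAt (dq r) (c • dp γ r t) t := by
    intro t
    refine hasDerivAt_euc2 fun i => ?_
    fin_cases i
    · have hv : (c • dp γ r t) 0 = -(r * Real.sin t) := by
        show c * (c⁻¹ * (-(r * Real.sin t))) = _
        field_simp
      simpa [dq, hv] using hcos t
    · have hv : (c • dp γ r t) 1 = r * Real.cos t := by
        show c * (c⁻¹ * (r * Real.cos t)) = _
        field_simp
      simpa [dq, hv] using hsin t
  have hdp : ∀ t, HasDerivAt (dp γ r) ((-c⁻¹) • dq r t) t := by
    intro t
    refine hasDerivAt_euc2 fun i => ?_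
    fin_cases i
    · have hv : ((-c⁻¹) • dq r t) 0 = c⁻¹ * (-(r * Real.cos t)) := by
        show -c⁻¹ * (r * Real.cos t) = _
        ring
      simp only [Fin.zero_eta]; rw [hv]; simpa [dp, ← hcdef] using (hsin t).neg.const_mul c⁻¹
    · have hv : ((-c⁻¹) • dq r t) 1 = c⁻¹ * (-(r * Real.sin t)) := by
        show -c⁻¹ * (r * Real.sin t) = _
        ring
      simp only [Fin.mk_one]; rw [hv]; simpa [dp, ← hcdef] using (hcos t).const_mul c⁻¹
  have hr' : r ≠ 0 := hr.ne'
  constructor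
  · rintro ⟨h1, h2⟩
    have heq := (h2 0).unique (hdp 0)
    have hq0 : dq r 0 0 = r := by show r * Real.cos 0 = r; simp
    have hs : ∀ a : ℝ, (a • dq r 0) 0 = a * r := fun a => by
      show a * dq r 0 0 = _; rw [hq0]
    have h0 : ((-2 * (dγ / (2 * ‖dq r 0‖)) *
        (‖(0 : EuclideanSpace ℝ (Fin 2))‖ ^ 2 - ‖dp γ r 0‖ ^ 2)) • dq r 0) 0
        = ((-c⁻¹) • dq r 0) 0 := by rw [heq]
    rw [hs, hs, hnq 0, hnp 0, norm_zero] at h0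
    field_simp at h0
    have key : (c + r * dγ) * (2 * r ^ 2 * c) = 0 := by linear_combination (2 * r * c) * h0
    rcases mul_eq_zero.1 key with h | h
    · exact h
    · exact absurd h (mul_ne_zero (by positivity) hc)
  · intro heq
    refine ⟨fun t => ?_, fun t => ?_⟩
    · rw [hnq t]; exact hdq t
    · have hA : (-2 * (dγ / (2 * ‖dq r t‖)) *
          (‖(0 : EuclideanSpace ℝ (Fin 2))‖ ^ 2 - ‖dp γ r t‖ ^ 2)) = -c⁻¹ := by
        rw [hnq t, hnp t, norm_zero]
        have hd : dγ = -c / r := by field_simp; linarith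
        rw [hd]; field_simp; ring
      rw [hA]; exact hdp t


/-- The circular orbit `q¹(t) = (r cos t, r sin t)`, `q² = -q¹` (so `q̄ ≡ 0`,
`δq = q¹`, `p̄ ≡ 0`, `δp = (γ₀-γ(2r))⁻¹ q̇¹`) satisfies the two-landmark
geodesic equations iff `γ₀ - γ(2r) + r γ'(2r) = 0`. -/
theorem circular_orbit_geodesic_iff (γ : ℝ → ℝ) (dγ r : ℝ) (hr : 0 < r)
    (hγ : HasDerivAt γ dγ (2 * r)) (hne : γ 0 ≠ γ (2 * r)) :
    (let δq : ℝ → EuclideanSpace ℝ (Fin 2) :=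
        fun t => !₂[r * Real.cos t, r * Real.sin t]
     let δp : ℝ → EuclideanSpace ℝ (Fin 2) :=
        fun t => (γ 0 - γ (2 * r))⁻¹ •
          (!₂[-(r * Real.sin t), r * Real.cos t] : EuclideanSpace ℝ (Fin 2))
     (∀ t, HasDerivAt δq ((γ 0 - γ (2 * ‖δq t‖)) • δp t) t) ∧
     (∀ t, HasDerivAt δp
        ((-2 * (dγ / (2 * ‖δq t‖)) *
          (‖(0 : EuclideanSpace ℝ (Fin 2))‖ ^ 2 - ‖δp t‖ ^ 2)) • δq t) t))
      ↔ γ 0 - γ (2 * r) + r * dγ = 0 := by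
  exact aux γ dγ r hr hne
end
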